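/- Let G be a connected finite graph. If every optimal vector coloring of G is locally injective, then G is a core. -/

import Mathlib

open SimpleGraph

/-- A vector `t`-coloring of `G`: an assignment of unit vectors to the vertices such
that adjacent vertices receive vectors with inner product at most `-1/(t-1)`. -/
def IsVectorColoring {V : Type*} (G : SimpleGraph V) {d : ℕ} (t : ℝ)
    (p : V → EuclideanSpace ℝ (Fin d)) : Prop :=
  (∀ v, ‖p v‖ = 1) ∧ ∀ u v : V, G.Adj u v → (inner ℝ (p u) (p v) : ℝ) ≤ -1 / (t - 1)

/-- The vector chromatic number of `G`. -/
noncomputable def vecChrom {V : Type*} (G : SimpleGraph V) : ℝ :=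
  sInf {t : ℝ | 2 ≤ t ∧ ∃ (d : ℕ) (p : V → EuclideanSpace ℝ (Fin d)), IsVectorColoring G t p}


/-- `G` is a core: every endomorphism of `G` is an automorphism. -/
def IsCore {V : Type*} (G : SimpleGraph V) : Prop :=
  ∀ φ : G →g G, ∃ ψ : G ≃g G, ∀ v, ψ v = φ v

section Aux

lemma sum_pad {k n : ℕ} (hkn : k ≤ n) (g : Fin k → ℝ) :
    ∑ j : Fin n, (if h' : (j : ℕ) < k then g ⟨j, h'⟩ else 0) = ∑ i : Fin k, g i := by
  have h1 : ∑ i : Fin k, g i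
      = ∑ i : Fin k, (fun i : ℕ => if h' : i < k then g ⟨i, h'⟩ else 0) (i : ℕ) := by
    apply Finset.sum_congr rfl
    intro i _
    simp [i.isLt]
  rw [h1]
  rw [show (∑ j : Fin n, if h' : (j : ℕ) < k then g ⟨j, h'⟩ else 0)
      = ∑ j : Fin n, (fun i : ℕ => if h' : i < k then g ⟨i, h'⟩ else 0) (j : ℕ) from rfl]
  rw [Fin.sum_univ_eq_sum_range (fun i : ℕ => if h' : i < k then g ⟨i, h'⟩ else 0) n,
    Fin.sum_univ_eq_sum_range (fun i : ℕ => if h' : i < k then g ⟨i, h'⟩ else 0) k]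
  refine (Finset.sum_subset (Finset.range_subset_range.2 hkn) ?_).symm
  intro i _ hi
  simp only [Finset.mem_range] at hi
  simp [hi]

lemma pad_exists {k n : ℕ} (hkn : k ≤ n) :
    ∃ L : EuclideanSpace ℝ (Fin k) → EuclideanSpace ℝ (Fin n),
      (∀ x, ‖L x‖ = ‖x‖) ∧ ∀ x y, (inner ℝ (L x) (L y) : ℝ) = inner ℝ x y := by
  refine ⟨fun x => WithLp.toLp 2 (fun j => if h' : (j : ℕ) < k then x ⟨j, h'⟩ else 0 : Fin n → ℝ), ?_, ?_⟩
  · intro x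
    rw [EuclideanSpace.norm_eq, EuclideanSpace.norm_eq]
    congr 1
    rw [← sum_pad hkn (fun i => ‖x i‖ ^ 2)]
    apply Finset.sum_congr rfl
    intro j _
    by_cases h' : (j : ℕ) < k <;> simp [h']
  · intro x y
    rw [PiLp.inner_apply, PiLp.inner_apply]
    simp only [RCLike.inner_apply, starRingEnd_apply, star_trivial]
    rw [← sum_pad hkn (fun i => y i * x i)]
    apply Finset.sum_congr rfl
    intro j _
    by_cases h' : (j : ℕ) < k <;> simp [h']

lemma toDim {V : Type} [Fintype V] (G : SimpleGraph V) {t : ℝ} {d : ℕ}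
    (p : V → EuclideanSpace ℝ (Fin d)) (hp : IsVectorColoring G t p) :
    ∃ q : V → EuclideanSpace ℝ (Fin (Fintype.card V)), IsVectorColoring G t q := by
  classical
  set W := Submodule.span ℝ (Set.range p) with hW
  have hfin : Module.finrank ℝ W ≤ Fintype.card V := by
    refine le_trans (finrank_span_le_card (Set.range p)) ?_
    rw [Set.toFinset_range]
    exact le_trans (Finset.card_image_le) (le_of_eq (Finset.card_univ))
  obtain ⟨L, hLn, hLi⟩ := pad_exists hfin
  have hmem : ∀ v, p v ∈ W := fun v => Submodule.subset_span (Set.mem_range_self v)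
  let b := stdOrthonormalBasis ℝ W
  refine ⟨fun v => L (b.repr ⟨p v, hmem v⟩), ⟨?_, ?_⟩⟩
  · intro v
    rw [hLn, LinearIsometryEquiv.norm_map]
    exact hp.1 v
  · intro u v huv
    rw [hLi, LinearIsometryEquiv.inner_map_map]
    rw [Submodule.coe_inner]
    exact hp.2 u v huv

lemma simplex_inner {n : ℕ} (hn : 2 ≤ n) (a b : Fin n)
    (x y : EuclideanSpace ℝ (Fin n))
    (hx : ∀ i, x i = (if i = a then 1 else 0) - 1/(n:ℝ))
    (hy : ∀ i, y i = (if i = b then 1 else 0) - 1/(n:ℝ)) :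
    (inner ℝ x y : ℝ) = (if a = b then 1 else 0) - 1/(n:ℝ) := by
  have hn0 : (n:ℝ) ≠ 0 := by positivity
  rw [PiLp.inner_apply]
  simp only [RCLike.inner_apply, starRingEnd_apply, star_trivial]
  have : ∀ i : Fin n, x i * y i
      = (if i = a then (if i = b then (1:ℝ) else 0) else 0)
        - (1/(n:ℝ)) * (if i = a then 1 else 0) - (1/(n:ℝ)) * (if i = b then 1 else 0)
        + 1/(n:ℝ)^2 := by
    intro i
    rw [hx, hy]
    by_cases h1 : i = a <;> by_cases h2 : i = b <;> by_cases h3 : a = b <;> simp_all <;> ring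
  rw [Finset.sum_congr rfl (fun i _ => (mul_comm (y i) (x i)).trans (this i))]
  simp only [Finset.sum_add_distrib, Finset.sum_sub_distrib, ← Finset.mul_sum,
    Finset.sum_ite_eq', Finset.mem_univ, if_true, Finset.sum_const, Finset.card_univ,
    Fintype.card_fin, nsmul_eq_mul]
  have h2 : (if a = b then (1:ℝ) else 0) = (if b = a then 1 else 0) := by
    by_cases h : a = b <;> simp [h, Ne.symm, eq_comm]
  rw [h2]
  field_simp
  ring

lemma exists_coloring {V : Type} [Fintype V] (G : SimpleGraph V) (hn : 2 ≤ Fintype.card V) :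
    ∃ t : ℝ, 2 ≤ t ∧ ∃ (d : ℕ) (p : V → EuclideanSpace ℝ (Fin d)),
      IsVectorColoring G t p := by
  classical
  set n := Fintype.card V with hn'
  have hnR : (2:ℝ) ≤ (n:ℝ) := by exact_mod_cast hn
  have hn0 : (n:ℝ) ≠ 0 := by linarith
  have hn1 : (n:ℝ) - 1 ≠ 0 := by linarith
  let e := Fintype.equivFin V
  let q0 : V → EuclideanSpace ℝ (Fin n) := fun v =>
    (WithLp.equiv 2 (Fin n → ℝ)).symm (fun i => (if i = e v then 1 else 0) - 1/(n:ℝ))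
  have hq0 : ∀ v i, q0 v i = (if i = e v then 1 else 0) - 1/(n:ℝ) := fun v i => rfl
  have hsq : ∀ v, ‖q0 v‖ ^ 2 = 1 - 1/(n:ℝ) := by
    intro v
    rw [← real_inner_self_eq_norm_sq]
    rw [simplex_inner hn (e v) (e v) (q0 v) (q0 v) (hq0 v) (hq0 v)]
    simp
  have hpos : ∀ v, 0 < ‖q0 v‖ := by
    intro v
    have h1 : 0 < ‖q0 v‖ ^ 2 := by rw [hsq]; rw [sub_pos]; rw [div_lt_one] <;> linarith
    nlinarith [norm_nonneg (q0 v)]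
  have hnormeq : ∀ u v, ‖q0 u‖ = ‖q0 v‖ := by
    intro u v
    have := hsq u; have := hsq v
    nlinarith [hpos u, hpos v]
  refine ⟨(n:ℝ), hnR, n, fun v => ‖q0 v‖⁻¹ • q0 v, ⟨?_, ?_⟩⟩
  · intro v
    rw [norm_smul, norm_inv, norm_norm, inv_mul_cancel₀ (ne_of_gt (hpos v))]
  · intro u v huv
    rw [real_inner_smul_left, real_inner_smul_right]
    rw [simplex_inner hn (e u) (e v) (q0 u) (q0 v) (hq0 u) (hq0 v)]
    have hne : e u ≠ e v := fun hh => (G.ne_of_adj huv) (e.injective hh)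
    rw [if_neg hne]
    rw [hnormeq u v]
    have h2 := hsq v
    have hval : ‖q0 v‖⁻¹ * (‖q0 v‖⁻¹ * (0 - 1/(n:ℝ))) = -1/((n:ℝ)-1) := by
      have hinv : ‖q0 v‖⁻¹ * ‖q0 v‖⁻¹ = (1 - 1/(n:ℝ))⁻¹ := by
        rw [← h2]; rw [pow_two]; rw [mul_inv]
      rw [← mul_assoc, hinv]
      field_simp
      ring
    rw [hval]

/-- Attainment of the vector chromatic number, given at least two vertices. -/
lemma attained {V : Type} [Fintype V] (G : SimpleGraph V) (hn : 2 ≤ Fintype.card V) :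
    ∃ p : V → EuclideanSpace ℝ (Fin (Fintype.card V)), IsVectorColoring G (vecChrom G) p := by
  classical
  set n := Fintype.card V with hn'
  set A := {t : ℝ | 2 ≤ t ∧ ∃ (d : ℕ) (p : V → EuclideanSpace ℝ (Fin d)),
    IsVectorColoring G t p} with hA
  have hAne : A.Nonempty := by
    obtain ⟨t, ht2, hcol⟩ := exists_coloring G hn
    exact ⟨t, ht2, hcol⟩
  have hτ : vecChrom G = sInf A := rfl
  have hτ2 : 2 ≤ sInf A := le_csInf hAne (fun t ht => ht.1)
  have hmono : ∀ t t' : ℝ, 2 ≤ t → t ≤ t' → -1/(t-1) ≤ -1/(t'-1) := by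
    intro t t' h1 h2
    have h3 : (0:ℝ) < t - 1 := by linarith
    have h4 : 1/(t'-1) ≤ 1/(t-1) := one_div_le_one_div_of_le h3 (by linarith)
    rw [neg_div, neg_div]
    linarith
  -- the candidate sets
  let E := EuclideanSpace ℝ (Fin n)
  let Z : ℝ → Set (V → E) := fun t => {p | IsVectorColoring G t p}
  have hZmono : ∀ t t', 2 ≤ t → t ≤ t' → Z t ⊆ Z t' := by
    intro t t' h1 h2 p hp
    exact ⟨hp.1, fun u v huv => le_trans (hp.2 u v huv) (hmono t t' h1 h2)⟩
  have hZne : ∀ t ∈ A, (Z t).Nonempty := by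
    intro t ht
    obtain ⟨d, p, hp⟩ := ht.2
    obtain ⟨q, hq⟩ := toDim G p hp
    exact ⟨q, hq⟩
  have hZclosed : ∀ t, IsClosed (Z t) := by
    intro t
    have hset : Z t = (⋂ v, {p : V → E | ‖p v‖ = 1}) ∩
        ⋂ u, ⋂ v, ⋂ (_ : G.Adj u v), {p : V → E | (inner ℝ (p u) (p v) : ℝ) ≤ -1/(t-1)} := by
      ext p
      simp only [Set.mem_inter_iff, Set.mem_iInter, Set.mem_setOf_eq]
      exact Iff.rfl
    rw [hset]
    apply IsClosed.inter
    · exact isClosed_iInter fun v =>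
        isClosed_eq (continuous_norm.comp (continuous_apply v)) continuous_const
    · exact isClosed_iInter fun u => isClosed_iInter fun v => isClosed_iInter fun _ =>
        isClosed_le ((continuous_apply u).inner (continuous_apply v)) continuous_const
  have hScompact : IsCompact (Set.univ.pi fun _ : V => Metric.sphere (0:E) 1) :=
    isCompact_univ_pi fun _ => isCompact_sphere 0 1
  have hZcompact : ∀ t, IsCompact (Z t) := by
    intro t
    refine IsCompact.of_isClosed_subset hScompact (hZclosed t) ?_
    intro p hp
    intro v _
    rw [Metric.mem_sphere, dist_zero_right]
    exact hp.1 v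
  -- intersection over A
  have hιne : Nonempty {t // t ∈ A} := ⟨⟨hAne.choose, hAne.choose_spec⟩⟩
  have hdir : Directed (fun (x1 x2 : Set (V → E)) => x1 ⊇ x2) (fun i : {t // t ∈ A} => Z i.1) := by
    intro i j
    rcases le_total i.1 j.1 with hij | hij
    · exact ⟨i, subset_rfl, hZmono i.1 j.1 i.2.1 hij⟩
    · exact ⟨j, hZmono j.1 i.1 j.2.1 hij, subset_rfl⟩
  have hint : (⋂ i : {t // t ∈ A}, Z i.1).Nonempty := by
    refine IsCompact.nonempty_iInter_of_directed_nonempty_isCompact_isClosed _ hdir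
      (fun i => hZne i.1 i.2) (fun i => hZcompact i.1) (fun i => hZclosed i.1)
  obtain ⟨p, hp⟩ := hint
  rw [Set.mem_iInter] at hp
  refine ⟨p, ⟨(hp ⟨hAne.choose, hAne.choose_spec⟩).1, ?_⟩⟩
  intro u v huv
  set x := (inner ℝ (p u) (p v) : ℝ) with hxdef
  have hx : ∀ t ∈ A, x ≤ -1/(t-1) := fun t ht => (hp ⟨t, ht⟩).2 u v huv
  obtain ⟨t0, ht0⟩ := id hAne
  have hxneg : x < 0 := by
    have h1 := hx t0 ht0
    have h2 : (0:ℝ) < t0 - 1 := by have := ht0.1; linarith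
    rw [neg_div] at h1
    have h3 : (0:ℝ) < 1/(t0-1) := by positivity
    linarith
  have hlb : ∀ t ∈ A, 1 + (-1/x) ≤ t := by
    intro t ht
    have h2 : (0:ℝ) < t - 1 := by have := ht.1; linarith
    have h3 : x * (t-1) ≤ -1 := (le_div_iff₀ h2).mp (hx t ht)
    have h4 : -1/x ≤ t - 1 := by
      rw [div_le_iff_of_neg hxneg]
      linarith [mul_comm x (t-1)]
    linarith
  have hτlb : 1 + (-1/x) ≤ sInf A := le_csInf hAne hlb
  have h5 : -1/x ≤ sInf A - 1 := by linarith
  have hτ1 : 0 < sInf A - 1 := by linarith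
  rw [hτ]
  rw [le_div_iff₀ hτ1]
  have h6 : x * (sInf A - 1) ≤ x * (-1/x) := mul_le_mul_of_nonpos_left h5 (le_of_lt hxneg)
  have h7 : x * (-1/x) = -1 := by
    field_simp
    rw [div_self (ne_of_lt hxneg)]
  linarith

end Aux

section Endo

variable {V : Type} (G : SimpleGraph V)

/-- iterates of a graph hom preserve adjacency -/
lemma iterate_adj (φ : G →g G) : ∀ (m : ℕ) {a b : V}, G.Adj a b → G.Adj ((φ : V → V)^[m] a) ((φ : V → V)^[m] b) := by
  intro m
  induction m with
  | zero => intro a b hab; simpa using hab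
  | succ k ih =>
    intro a b hab
    rw [Function.iterate_succ_apply, Function.iterate_succ_apply]
    exact ih (φ.map_adj hab)

/-- local injectivity of iterates -/
lemma iterate_locInj (φ : G →g G)
    (hφ : ∀ u v w : V, u ≠ v → G.Adj u w → G.Adj v w → (φ : V → V) u ≠ (φ : V → V) v) :
    ∀ (m : ℕ) (u v w : V), u ≠ v → G.Adj u w → G.Adj v w →
      (φ : V → V)^[m] u ≠ (φ : V → V)^[m] v := by
  intro m
  induction m with
  | zero => intro u v w huv _ _; simpa using huv
  | succ k ih =>
    intro u v w huv huw hvw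
    rw [Function.iterate_succ_apply, Function.iterate_succ_apply]
    exact ih _ _ ((φ : V → V) w) (hφ u v w huv huw hvw) (φ.map_adj huw) (φ.map_adj hvw)

lemma locInj_is_auto [Fintype V] (hc : G.Connected) (φ : G →g G)
    (hφ : ∀ u v w : V, u ≠ v → G.Adj u w → G.Adj v w → (φ : V → V) u ≠ (φ : V → V) v) :
    ∃ ψ : G ≃g G, ∀ v, ψ v = φ v := by
  classical
  set f : V → V := (φ : V → V) with hf
  -- find N ≥ 1 with f^[N+N] = f^[N]
  obtain ⟨a, b, hab, hfab⟩ := Finite.exists_ne_map_eq_of_infinite (fun m : ℕ => f^[m])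
  wlog hlt : a < b generalizing a b
  · exact this b a hab.symm hfab.symm (by omega)
  set q := b - a with hq
  have hq1 : 1 ≤ q := by omega
  have hper : f^[a + q] = f^[a] := by
    rw [hq]
    rw [show a + (b - a) = b by omega]
    exact hfab.symm
  have hstep : ∀ m, a ≤ m → f^[m + q] = f^[m] := by
    intro m hm
    have h1 : m + q = (m - a) + (a + q) := by omega
    have h2 : (m - a) + a = m := by omega
    rw [h1, Function.iterate_add, hper, ← Function.iterate_add, h2]
  have hloop : ∀ k m, a ≤ m → f^[m + k * q] = f^[m] := by
    intro k
    induction k with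
    | zero => intro m hm; simp
    | succ j ih =>
      intro m hm
      have : m + (j + 1) * q = (m + j * q) + q := by ring
      rw [this, hstep _ (by omega), ih m hm]
  set N := (a + 1) * q with hN
  have hN1 : 1 ≤ N := by
    have := hq1
    calc 1 ≤ q := hq1
    _ ≤ (a+1) * q := Nat.le_mul_of_pos_left q (by omega)
  have hNa : a ≤ N := by
    calc a ≤ a + 1 := by omega
    _ ≤ (a+1) * q := Nat.le_mul_of_pos_right (a+1) (by omega)
  have hidem : ∀ v, f^[N] (f^[N] v) = f^[N] v := by
    intro v
    rw [← Function.iterate_add_apply]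
    rw [show N + N = N + (a+1) * q by rw [hN], hloop (a+1) N hNa]
  -- e := f^[N] has all vertices fixed
  have hfix_adj : ∀ s v, f^[N] s = s → G.Adj s v → f^[N] v = v := by
    intro s v hs hsv
    by_contra hne
    have h1 : G.Adj (f^[N] v) (f^[N] s) := iterate_adj G φ N hsv.symm
    rw [hs] at h1
    have h2 : f^[N] v ≠ f^[N] (f^[N] v) := by
      refine iterate_locInj G φ hφ N v (f^[N] v) s (fun hh => hne hh.symm) hsv.symm h1
    exact h2 (hidem v).symm
  have hfix : ∀ v, f^[N] v = v := by
    intro v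
    have hreach : G.Reachable (f^[N] v) v := hc.preconnected (f^[N] v) v
    obtain ⟨w⟩ := hreach
    have : ∀ {x y : V} (w : G.Walk x y), f^[N] x = x → f^[N] y = y := by
      intro x y w
      induction w with
      | nil => exact id
      | cons hadj _ ih => intro hx; exact ih (hfix_adj _ _ hx hadj)
    exact this w (hidem v)
  -- φ is bijective
  have hNsucc : (N - 1) + 1 = N := by omega
  have hli : Function.LeftInverse (f^[N-1]) f := by
    intro v
    calc f^[N-1] (f v) = f^[(N-1)+1] v := (Function.iterate_succ_apply f (N-1) v).symm
    _ = f^[N] v := by rw [hNsucc]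
    _ = v := hfix v
  have hri : Function.RightInverse (f^[N-1]) f := by
    intro v
    calc f (f^[N-1] v) = f^[(N-1)+1] v := (Function.iterate_succ_apply' f (N-1) v).symm
    _ = f^[N] v := by rw [hNsucc]
    _ = v := hfix v
  have hbij : Function.Bijective f := ⟨hli.injective, hri.surjective⟩
  refine ⟨⟨Equiv.ofBijective f hbij, ?_⟩, fun v => rfl⟩
  intro u v
  constructor
  · intro hadj
    have h1 : G.Adj (f^[N-1] (f u)) (f^[N-1] (f v)) := iterate_adj G φ (N-1) hadj
    rwa [hli u, hli v] at h1
  · intro hadj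
    exact φ.map_adj hadj

end Endo

/-- If every optimal vector coloring of a connected finite graph `G` is locally injective,
then `G` is a core. -/
theorem stmt5 {V : Type} [Fintype V] (G : SimpleGraph V) (hc : G.Connected)
    (h : ∀ (d : ℕ) (p : V → EuclideanSpace ℝ (Fin d)),
      IsVectorColoring G (vecChrom G) p →
      ∀ u v w : V, u ≠ v → G.Adj u w → G.Adj v w → p u ≠ p v) :
    IsCore G := by
  intro φ
  apply locInj_is_auto G hc φ
  intro u v w huv huw hvw
  intro heq
  -- there is an edge, so at least two vertices
  have hcard : 2 ≤ Fintype.card V := by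
    have := G.ne_of_adj huw
    exact Fintype.one_lt_card_iff_nontrivial.mpr ⟨u, w, this⟩
  obtain ⟨p, hp⟩ := attained G hcard
  have hq : IsVectorColoring G (vecChrom G) (fun x => p ((φ : V → V) x)) := by
    refine ⟨fun x => hp.1 _, fun x y hxy => hp.2 _ _ (φ.map_adj hxy)⟩
  have := h _ _ hq u v w huv huw hvw
  exact this (by simpa using congrArg p heq)
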